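/- For a single attribute with q parties, target seat numbers s*_j ≥ 0 summing to k, and integer allocations R_j ≥ 0 summing to k, an allocation minimizes the sum over j of |R_j - s*_j| if and only if it is a Hamilton (largest remainder) allocation, i.e., each R_j equals floor(s*_j) plus possibly 1, where the extra seats go to the parties with the largest fractional remainders s*_j - floor(s*_j). -/

import Mathlib

open Finset

/-- `R` is a Hamilton (largest remainder) allocation for targets `s` and house size `k`:
each party receives `⌊s j⌋` seats plus possibly one extra seat, where the extra seats
go to the parties with the largest fractional remainders. -/
def IsHamilton (q k : ℕ) (s : Fin q → ℝ) (R : Fin q → ℕ) : Prop :=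
  (∑ j, R j = k) ∧
  ∃ T : Finset (Fin q),
    (∀ j, (R j : ℤ) = ⌊s j⌋ + (if j ∈ T then 1 else 0)) ∧
    (∀ j ∈ T, ∀ j' ∉ T, s j' - ⌊s j'⌋ ≤ s j - ⌊s j⌋)

private lemma sum_two_diff {q : ℕ} (f g : Fin q → ℝ) {j j' : Fin q} (hne : j ≠ j')
    (h : ∀ i, i ≠ j → i ≠ j' → f i = g i) :
    ∑ i, f i = ∑ i, g i + (f j - g j) + (f j' - g j') := by
  have key : ∑ i, (f i - g i) = ∑ i ∈ ({j, j'} : Finset (Fin q)), (f i - g i) := by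
    refine (Finset.sum_subset (Finset.subset_univ _) ?_).symm
    intro i _ hi
    simp only [Finset.mem_insert, Finset.mem_singleton] at hi
    push_neg at hi
    rw [h i hi.1 hi.2]; ring
  rw [Finset.sum_pair hne] at key
  rw [Finset.sum_sub_distrib] at key
  linarith

private lemma move_sums {q : ℕ} (s : Fin q → ℝ) (R : Fin q → ℕ) {j j' : Fin q}
    (hne : j ≠ j') (h1 : 1 ≤ R j) :
    ∃ R' : Fin q → ℕ, (∑ i, R' i = ∑ i, R i) ∧
      ∑ i, |(R' i : ℝ) - s i| =
        ∑ i, |(R i : ℝ) - s i| + (|((R j : ℝ) - 1) - s j| - |(R j : ℝ) - s j|)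
          + (|((R j' : ℝ) + 1) - s j'| - |(R j' : ℝ) - s j'|) := by
  classical
  set R' : Fin q → ℕ := fun i => if i = j then R j - 1 else if i = j' then R j' + 1 else R i
    with hR'def
  have hj : R' j = R j - 1 := by simp [hR'def]
  have hj' : R' j' = R j' + 1 := by simp [hR'def, hne.symm]
  have hoth : ∀ i, i ≠ j → i ≠ j' → R' i = R i := by
    intro i h1 h2; simp [hR'def, h1, h2]
  have hcj : (R' j : ℝ) = (R j : ℝ) - 1 := by
    rw [hj, Nat.cast_sub h1]; norm_num
  have hcj' : (R' j' : ℝ) = (R j' : ℝ) + 1 := by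
    rw [hj']; push_cast; ring
  have hsum : ∑ i, R' i = ∑ i, R i := by
    have := sum_two_diff (fun i => (R' i : ℝ)) (fun i => (R i : ℝ)) hne
      (fun i hi hi' => by rw [hoth i hi hi'])
    rw [hcj, hcj'] at this
    have h2 : ∑ i, (R' i : ℝ) = ∑ i, (R i : ℝ) := by linarith
    exact_mod_cast h2
  refine ⟨R', hsum, ?_⟩
  have := sum_two_diff (fun i => |(R' i : ℝ) - s i|) (fun i => |(R i : ℝ) - s i|) hne
    (fun i hi hi' => by rw [hoth i hi hi'])
  rw [hcj, hcj'] at this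
  exact this

theorem stmt0 (q k : ℕ) (hk : 0 < k) (s : Fin q → ℝ)
    (hs : ∀ j, 0 ≤ s j) (hsum : ∑ j, s j = k)
    (R : Fin q → ℕ) (hR : ∑ j, R j = k) :
    (∀ R' : Fin q → ℕ, (∑ j, R' j = k) →
        ∑ j, |(R j : ℝ) - s j| ≤ ∑ j, |(R' j : ℝ) - s j|)
      ↔ IsHamilton q k s R := by
  classical
  have hfl : ∀ i, ((⌊s i⌋ : ℝ)) ≤ s i := fun i => Int.floor_le (s i)
  have hfl1 : ∀ i, s i < (⌊s i⌋ : ℝ) + 1 := fun i => Int.lt_floor_add_one (s i)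
  have hfl0 : ∀ i, (0 : ℤ) ≤ ⌊s i⌋ := fun i => Int.floor_nonneg.mpr (hs i)
  have hsR : ∑ i, (R i : ℝ) = (k : ℝ) := by exact_mod_cast congrArg (Nat.cast : ℕ → ℝ) hR
  constructor
  · -- minimizer → Hamilton
    intro hmin
    -- the handy consequence of minimality for a one-seat move from j to j'
    have hmove : ∀ (j j' : Fin q), j ≠ j' → 1 ≤ R j →
        0 ≤ (|((R j : ℝ) - 1) - s j| - |(R j : ℝ) - s j|)
          + (|((R j' : ℝ) + 1) - s j'| - |(R j' : ℝ) - s j'|) := by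
      intro j j' hne h1
      obtain ⟨R'', hsum'', hcost''⟩ := move_sums s R hne h1
      have : ∑ i, R'' i = k := by rw [hsum'']; exact hR
      have := hmin R'' this
      rw [hcost''] at this
      linarith
    -- Step 1 : no party gets 2 or more extra seats
    have step1 : ∀ j : Fin q, (R j : ℤ) ≤ ⌊s j⌋ + 1 := by
      intro j
      by_contra hcon
      push_neg at hcon
      have hj2 : (⌊s j⌋ : ℤ) + 2 ≤ (R j : ℤ) := by omega
      have hj2R : ((⌊s j⌋ : ℝ)) + 2 ≤ (R j : ℝ) := by exact_mod_cast hj2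
      have h1 : 1 ≤ R j := by
        have : (1 : ℤ) ≤ (R j : ℤ) := by have := hfl0 j; omega
        exact_mod_cast this
      by_cases hex : ∃ j', j' ≠ j ∧ (R j' : ℤ) ≤ ⌊s j'⌋ ∧
          ((R j' : ℤ) < ⌊s j'⌋ ∨ (⌊s j'⌋ : ℝ) < s j')
      · obtain ⟨j', hne, hle, hcase⟩ := hex
        have hmv := hmove j j' hne.symm h1
        have hleR : (R j' : ℝ) ≤ (⌊s j'⌋ : ℝ) := by exact_mod_cast hle
        -- delta at j is -1
        have e1 : |((R j : ℝ) - 1) - s j| = (R j : ℝ) - 1 - s j :=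
          abs_of_nonneg (by have := hfl1 j; linarith)
        have e2 : |(R j : ℝ) - s j| = (R j : ℝ) - s j :=
          abs_of_nonneg (by have := hfl1 j; linarith)
        rcases lt_or_eq_of_le hle with hlt | heq
        · -- recipient strictly below floor : delta at j' is -1
          have hltR' : (R j' : ℝ) + 1 ≤ (⌊s j'⌋ : ℝ) := by
            have : (R j' : ℤ) + 1 ≤ ⌊s j'⌋ := by omega
            exact_mod_cast this
          have e3 : |((R j' : ℝ) + 1) - s j'| = -(((R j' : ℝ) + 1) - s j') :=
            abs_of_nonpos (by have := hfl j'; linarith)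
          have e4 : |(R j' : ℝ) - s j'| = -((R j' : ℝ) - s j') :=
            abs_of_nonpos (by have := hfl j'; linarith)
          rw [e1, e2, e3, e4] at hmv
          linarith
        · -- recipient at floor with positive remainder
          have hfrac : (⌊s j'⌋ : ℝ) < s j' := by
            rcases hcase with h | h
            · omega
            · exact h
          have heqR : (R j' : ℝ) = (⌊s j'⌋ : ℝ) := by exact_mod_cast heq
          have e3 : |((R j' : ℝ) + 1) - s j'| = ((R j' : ℝ) + 1) - s j' :=
            abs_of_nonneg (by have := hfl1 j'; linarith)
          have e4 : |(R j' : ℝ) - s j'| = -((R j' : ℝ) - s j') :=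
            abs_of_nonpos (by linarith)
          rw [e1, e2, e3, e4] at hmv
          linarith
      · -- no possible recipient : total sum argument gives a contradiction
        push_neg at hex
        set P : Finset (Fin q) := univ.filter (fun i => ⌊s i⌋ + 1 ≤ (R i : ℤ)) with hP
        have hjP : j ∈ P := by
          simp only [hP, Finset.mem_filter, Finset.mem_univ, true_and]; omega
        have hzero : ∑ i, ((R i : ℝ) - s i) = 0 := by
          rw [Finset.sum_sub_distrib, hsR, hsum]; ring
        have hsplit := Finset.sum_filter_add_sum_filter_not univ
          (fun i => ⌊s i⌋ + 1 ≤ (R i : ℤ)) (fun i => (R i : ℝ) - s i)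
        have hposP : 0 < ∑ i ∈ P, ((R i : ℝ) - s i) := by
          apply Finset.sum_pos _ ⟨j, hjP⟩
          intro i hi
          simp only [hP, Finset.mem_filter, Finset.mem_univ, true_and] at hi
          have : ((⌊s i⌋ : ℝ)) + 1 ≤ (R i : ℝ) := by exact_mod_cast hi
          have := hfl1 i; linarith
        have hzeroN : ∑ i ∈ univ.filter (fun i => ¬(⌊s i⌋ + 1 ≤ (R i : ℤ))),
            ((R i : ℝ) - s i) = 0 := by
          apply Finset.sum_eq_zero
          intro i hi
          simp only [Finset.mem_filter, Finset.mem_univ, true_and] at hi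
          have hile : (R i : ℤ) ≤ ⌊s i⌋ := by omega
          have hine : i ≠ j := by
            intro h; subst h; omega
          have := hex i hine hile
          have hfeq : (R i : ℤ) = ⌊s i⌋ := le_antisymm hile this.1
          have hseq : s i = (⌊s i⌋ : ℝ) := le_antisymm this.2 (hfl i)
          have : (R i : ℝ) = (⌊s i⌋ : ℝ) := by exact_mod_cast hfeq
          linarith [this, hseq]
        rw [hP] at hposP
        linarith [hsplit, hzero, hposP, hzeroN]
    -- Step 2 : every party gets at least its floor
    have step2 : ∀ j : Fin q, ⌊s j⌋ ≤ (R j : ℤ) := by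
      intro j
      by_contra hcon
      push_neg at hcon
      have hj1 : (R j : ℤ) + 1 ≤ ⌊s j⌋ := by omega
      have hj1R : (R j : ℝ) + 1 ≤ (⌊s j⌋ : ℝ) := by exact_mod_cast hj1
      -- find a donor j' with R j' = ⌊s j'⌋ + 1
      have hdon : ∃ j', j' ≠ j ∧ (R j' : ℤ) = ⌊s j'⌋ + 1 := by
        by_contra hno
        push_neg at hno
        have hall : ∀ i ∈ univ.erase j, (R i : ℝ) - s i ≤ 0 := by
          intro i hi
          have hine : i ≠ j := (Finset.mem_erase.mp hi).1
          have : (R i : ℤ) ≤ ⌊s i⌋ := by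
            have h1 := step1 i
            rcases eq_or_lt_of_le h1 with he | hl
            · exact absurd he (hno i hine)
            · omega
          have : (R i : ℝ) ≤ (⌊s i⌋ : ℝ) := by exact_mod_cast this
          have := hfl i; linarith
        have hzero : ∑ i, ((R i : ℝ) - s i) = 0 := by
          rw [Finset.sum_sub_distrib, hsR, hsum]; ring
        have hsplit := Finset.add_sum_erase univ (fun i => (R i : ℝ) - s i)
          (Finset.mem_univ j)
        have hrest : ∑ i ∈ univ.erase j, ((R i : ℝ) - s i) ≤ 0 :=
          Finset.sum_nonpos hall
        have hjneg : (R j : ℝ) - s j ≤ -1 := by have := hfl j; linarith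
        linarith
      obtain ⟨j', hne, hdj'⟩ := hdon
      have h1 : 1 ≤ R j' := by
        have : (1 : ℤ) ≤ (R j' : ℤ) := by have := hfl0 j'; omega
        exact_mod_cast this
      have hmv := hmove j' j hne h1
      have hdj'R : (R j' : ℝ) = (⌊s j'⌋ : ℝ) + 1 := by exact_mod_cast hdj'
      have e1 : |((R j' : ℝ) - 1) - s j'| = -(((R j' : ℝ) - 1) - s j') :=
        abs_of_nonpos (by have := hfl j'; linarith)
      have e2 : |(R j' : ℝ) - s j'| = (R j' : ℝ) - s j' :=
        abs_of_nonneg (by have := hfl1 j'; linarith)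
      have e3 : |((R j : ℝ) + 1) - s j| = -(((R j : ℝ) + 1) - s j) :=
        abs_of_nonpos (by have := hfl j; linarith)
      have e4 : |(R j : ℝ) - s j| = -((R j : ℝ) - s j) :=
        abs_of_nonpos (by have := hfl j; linarith)
      rw [e1, e2, e3, e4] at hmv
      have := hfl1 j'
      linarith
    -- assemble Hamilton structure
    refine ⟨hR, univ.filter (fun i => (R i : ℤ) = ⌊s i⌋ + 1), ?_, ?_⟩
    · intro j
      by_cases hj : (R j : ℤ) = ⌊s j⌋ + 1
      · simp only [Finset.mem_filter, Finset.mem_univ, true_and, hj, if_pos]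
      · have : (R j : ℤ) = ⌊s j⌋ := by have := step1 j; have := step2 j; omega
        simp only [Finset.mem_filter, Finset.mem_univ, true_and, hj, if_neg, this]
        omega
    · intro j hj j' hj'
      simp only [Finset.mem_filter, Finset.mem_univ, true_and] at hj hj'
      have hdj : (R j : ℤ) = ⌊s j⌋ + 1 := hj
      have hdj' : (R j' : ℤ) = ⌊s j'⌋ := by
        have := step1 j'; have := step2 j'; omega
      by_contra hcon
      push_neg at hcon
      have hne : j ≠ j' := by
        intro h; subst h; omega
      have h1 : 1 ≤ R j := by
        have : (1 : ℤ) ≤ (R j : ℤ) := by have := hfl0 j; omega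
        exact_mod_cast this
      have hmv := hmove j j' hne h1
      have hdjR : (R j : ℝ) = (⌊s j⌋ : ℝ) + 1 := by exact_mod_cast hdj
      have hdj'R : (R j' : ℝ) = (⌊s j'⌋ : ℝ) := by exact_mod_cast hdj'
      have e1 : |((R j : ℝ) - 1) - s j| = -(((R j : ℝ) - 1) - s j) :=
        abs_of_nonpos (by have := hfl j; linarith)
      have e2 : |(R j : ℝ) - s j| = (R j : ℝ) - s j :=
        abs_of_nonneg (by have := hfl1 j; linarith)
      have e3 : |((R j' : ℝ) + 1) - s j'| = ((R j' : ℝ) + 1) - s j' :=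
        abs_of_nonneg (by have := hfl1 j'; linarith)
      have e4 : |(R j' : ℝ) - s j'| = -((R j' : ℝ) - s j') :=
        abs_of_nonpos (by have := hfl j'; linarith)
      rw [e1, e2, e3, e4] at hmv
      linarith
  · -- Hamilton → minimizer
    rintro ⟨hRk, T, hT, hTord⟩ R' hR'
    have hsR' : ∑ i, (R' i : ℝ) = (k : ℝ) := by exact_mod_cast congrArg (Nat.cast : ℕ → ℝ) hR'
    set F : Fin q → ℝ := fun i => s i - (⌊s i⌋ : ℝ) with hFdef
    have hF0 : ∀ i, 0 ≤ F i := fun i => by simp only [hFdef]; linarith [hfl i]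
    have hF1 : ∀ i, F i < 1 := fun i => by simp only [hFdef]; linarith [hfl1 i]
    -- representation of R in ℝ
    have hRrep : ∀ i, (R i : ℝ) - s i = (if i ∈ T then 1 else 0) - F i := by
      intro i
      have h := hT i
      by_cases hi : i ∈ T
      · rw [if_pos hi] at h ⊢
        have : (R i : ℝ) = (⌊s i⌋ : ℝ) + 1 := by exact_mod_cast h
        rw [this]; simp only [hFdef]; ring
      · rw [if_neg hi] at h ⊢
        have h' : (R i : ℤ) = ⌊s i⌋ := by omega
        have : (R i : ℝ) = (⌊s i⌋ : ℝ) := by exact_mod_cast h'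
        rw [this]; simp only [hFdef]; ring
    -- cost of R
    have hcardT : ∑ i, (if i ∈ T then (1:ℝ) else 0) = (T.card : ℝ) := by
      simp [Finset.sum_ite_mem]
    have hFT : ∑ i, (if i ∈ T then F i else 0) = ∑ i ∈ T, F i := by
      simp [Finset.sum_ite_mem]
    have hcostR : ∑ i, |(R i : ℝ) - s i|
        = (T.card : ℝ) + (∑ i, F i) - 2 * ∑ i ∈ T, F i := by
      have hpt : ∀ i, |(R i : ℝ) - s i|
          = (if i ∈ T then (1:ℝ) else 0) + F i - 2 * (if i ∈ T then F i else 0) := by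
        intro i
        rw [hRrep i]
        by_cases hi : i ∈ T
        · rw [if_pos hi, if_pos hi, abs_of_nonneg (by have := hF1 i; linarith)]; ring
        · rw [if_neg hi, if_neg hi, abs_of_nonpos (by have := hF0 i; linarith)]; ring
      rw [Finset.sum_congr rfl (fun i _ => hpt i)]
      rw [Finset.sum_sub_distrib, Finset.sum_add_distrib, ← Finset.mul_sum, hcardT, hFT]
    -- cost of R'
    set d : Fin q → ℤ := fun i => (R' i : ℤ) - ⌊s i⌋ with hddef
    have hdrep : ∀ i, (R' i : ℝ) - s i = (d i : ℝ) - F i := by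
      intro i; simp only [hddef, hFdef]; push_cast; ring
    set A : Finset (Fin q) := univ.filter (fun i => 1 ≤ d i) with hAdef
    have hdA : ∑ i, (if 1 ≤ d i then (d i : ℝ) else 0) = ∑ i ∈ A, (d i : ℝ) := by
      rw [hAdef, Finset.sum_filter]
    have hFA : ∑ i, (if 1 ≤ d i then F i else 0) = ∑ i ∈ A, F i := by
      rw [hAdef, Finset.sum_filter]
    have hcostR' : ∑ i, |(R' i : ℝ) - s i|
        = 2 * (∑ i ∈ A, (d i : ℝ)) - (∑ i, (d i : ℝ)) + (∑ i, F i) - 2 * ∑ i ∈ A, F i := by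
      have hpt : ∀ i, |(R' i : ℝ) - s i|
          = 2 * (if 1 ≤ d i then (d i : ℝ) else 0) - (d i : ℝ) + F i
            - 2 * (if 1 ≤ d i then F i else 0) := by
        intro i
        rw [hdrep i]
        by_cases hi : 1 ≤ d i
        · have : (1 : ℝ) ≤ (d i : ℝ) := by exact_mod_cast hi
          rw [if_pos hi, if_pos hi, abs_of_nonneg (by have := hF1 i; linarith)]; ring
        · have : (d i : ℝ) ≤ 0 := by
            have : d i ≤ 0 := by omega
            exact_mod_cast this
          rw [if_neg hi, if_neg hi, abs_of_nonpos (by have := hF0 i; linarith)]; ring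
      rw [Finset.sum_congr rfl (fun i _ => hpt i)]
      rw [Finset.sum_sub_distrib, Finset.sum_add_distrib, Finset.sum_sub_distrib,
        ← Finset.mul_sum, ← Finset.mul_sum, hdA, hFA]
    -- total of d equals T.card
    have hu : ∑ i, (d i : ℝ) = (T.card : ℝ) := by
      have h1 : ∑ i, ((d i : ℝ) - (if i ∈ T then (1:ℝ) else 0))
          = ∑ i, ((R' i : ℝ) - (R i : ℝ)) := by
        apply Finset.sum_congr rfl
        intro i _
        have hri := hRrep i
        have hdi := hdrep i
        linarith
      rw [Finset.sum_sub_distrib, Finset.sum_sub_distrib, hcardT, hsR', hsR] at h1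
      linarith
    -- split of d-sum
    have hsplitd := Finset.sum_filter_add_sum_filter_not univ (fun i => 1 ≤ d i)
      (fun i => (d i : ℝ))
    have hbneg : ∑ i ∈ univ.filter (fun i => ¬ 1 ≤ d i), (d i : ℝ) ≤ 0 := by
      apply Finset.sum_nonpos
      intro i hi
      simp only [Finset.mem_filter, Finset.mem_univ, true_and] at hi
      have : d i ≤ 0 := by omega
      exact_mod_cast this
    have hAcard : (A.card : ℝ) ≤ ∑ i ∈ A, (d i : ℝ) := by
      have := Finset.card_nsmul_le_sum A (fun i => (d i : ℝ)) 1 (by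
        intro i hi
        simp only [hAdef, Finset.mem_filter, Finset.mem_univ, true_and] at hi
        show (1 : ℝ) ≤ (d i : ℝ)
        exact_mod_cast hi)
      simpa using this
    -- threshold θ
    obtain ⟨θ, hθ0, hθ1, hθT, hθnT⟩ :
        ∃ θ : ℝ, 0 ≤ θ ∧ θ ≤ 1 ∧ (∀ i ∈ T, θ ≤ F i) ∧ (∀ i ∉ T, F i ≤ θ) := by
      rcases T.eq_empty_or_nonempty with hTe | hTne
      · exact ⟨1, by norm_num, le_refl 1, by simp [hTe], fun i _ => (hF1 i).le⟩
      · obtain ⟨j₀, hj₀, hminT⟩ := Finset.exists_min_image T F hTne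
        exact ⟨F j₀, hF0 j₀, (hF1 j₀).le, fun i hi => hminT i hi,
          fun i hi => hTord j₀ hj₀ i hi⟩
    -- key inequality : ∑_A F - ∑_T F ≤ θ * (|A| - |T|)
    have hsd1 : ∑ i ∈ A \ T, F i ≤ ((A \ T).card : ℝ) * θ := by
      have := Finset.sum_le_card_nsmul (A \ T) F θ (by
        intro i hi
        exact hθnT i (Finset.mem_sdiff.mp hi).2)
      simpa [nsmul_eq_mul] using this
    have hsd2 : ((T \ A).card : ℝ) * θ ≤ ∑ i ∈ T \ A, F i := by
      have := Finset.card_nsmul_le_sum (T \ A) F θ (by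
        intro i hi
        exact hθT i (Finset.mem_sdiff.mp hi).1)
      simpa [nsmul_eq_mul] using this
    have hAsplit := Finset.sum_inter_add_sum_sdiff A T F
    have hTsplit := Finset.sum_inter_add_sum_sdiff T A F
    have hinterc : ∑ i ∈ A ∩ T, F i = ∑ i ∈ T ∩ A, F i := by rw [Finset.inter_comm]
    have hc1 : ((A \ T).card : ℝ) = (A.card : ℝ) - ((A ∩ T).card : ℝ) := by
      have := Finset.card_sdiff_add_card_inter A T
      have : ((A \ T).card + (A ∩ T).card : ℝ) = (A.card : ℝ) := by exact_mod_cast this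
      linarith
    have hc2 : ((T \ A).card : ℝ) = (T.card : ℝ) - ((A ∩ T).card : ℝ) := by
      have h := Finset.card_sdiff_add_card_inter T A
      have h' : ((T \ A).card + (T ∩ A).card : ℝ) = (T.card : ℝ) := by exact_mod_cast h
      have h'' : ((T ∩ A).card : ℝ) = ((A ∩ T).card : ℝ) := by
        rw [Finset.inter_comm]
      linarith
    have hkey1 : (∑ i ∈ A, F i) - (∑ i ∈ T, F i)
        ≤ θ * ((A.card : ℝ) - (T.card : ℝ)) := by
      have e : ((A \ T).card : ℝ) * θ - ((T \ A).card : ℝ) * θ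
          = θ * ((A.card : ℝ) - (T.card : ℝ)) := by
        rw [hc1, hc2]; ring
      linarith
    -- conclude ∑_A F - ∑_T F ≤ - (negative part)
    have hkey : (∑ i ∈ A, F i) - (∑ i ∈ T, F i)
        ≤ -(∑ i ∈ univ.filter (fun i => ¬ 1 ≤ d i), (d i : ℝ)) := by
      rcases le_total (A.card : ℝ) (T.card : ℝ) with hle | hle
      · have : θ * ((A.card : ℝ) - (T.card : ℝ)) ≤ 0 :=
          mul_nonpos_of_nonneg_of_nonpos hθ0 (by linarith)
        linarith
      · have h1 : θ * ((A.card : ℝ) - (T.card : ℝ))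
            ≤ 1 * ((A.card : ℝ) - (T.card : ℝ)) :=
          mul_le_mul_of_nonneg_right hθ1 (by linarith)
        -- |A| ≤ ∑_A d = |T| - (negative part)
        have h2 : ∑ i ∈ A, (d i : ℝ)
            = (T.card : ℝ) - ∑ i ∈ univ.filter (fun i => ¬ 1 ≤ d i), (d i : ℝ) := by
          have : ∑ i ∈ univ.filter (fun i => 1 ≤ d i), (d i : ℝ) = ∑ i ∈ A, (d i : ℝ) := by
            rw [hAdef]
          linarith [hsplitd, hu]
        linarith
    rw [hcostR, hcostR']
    have h2 : ∑ i ∈ univ.filter (fun i => 1 ≤ d i), (d i : ℝ) = ∑ i ∈ A, (d i : ℝ) := by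
      rw [hAdef]
    linarith [hsplitd, hu, hkey]
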